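/- Let H be a complex Hilbert space, let a ∈ B(H) with polar decomposition a = r|a|, and suppose 1 is an isolated point of σ(|a|) with 1 ∈ σ(|a|). Then v = r · χ_{{1}}(|a|) is a partial isometry in B(H), where χ_{{1}} is the characteristic function of {1} (continuous on σ(|a|) by isolation), and a v* = v v*, so a = v + (1 - v v*) a (1 - v* v). -/

import Mathlib

variable {H : Type*} [NormedAddCommGroup H] [InnerProductSpace ℂ H] [CompleteSpace H]

lemma stmt15_cont {S : Set ℝ}
    (hiso : ∃ ε > (0 : ℝ), ∀ s ∈ S, |s - 1| < ε → s = 1) :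
    ContinuousOn (Set.indicator ({1} : Set ℝ) (fun _ => (1 : ℝ))) S := by
  obtain ⟨ε, hε, h⟩ := hiso
  intro s hs
  by_cases h1 : s = 1
  · subst h1
    have hev : ∀ᶠ t in nhdsWithin (1 : ℝ) S,
        Set.indicator ({1} : Set ℝ) (fun _ => (1 : ℝ)) t = 1 := by
      filter_upwards [self_mem_nhdsWithin,
        mem_nhdsWithin_of_mem_nhds (Metric.ball_mem_nhds (1 : ℝ) hε)] with t htS htb
      have ht1 : t = 1 := h t htS (by simpa [Real.dist_eq] using htb)
      simp [ht1]
    exact (continuousWithinAt_const (b := (1 : ℝ))).congr_of_eventuallyEq hev (by simp)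
  · have hd : (0 : ℝ) < dist s 1 := dist_pos.mpr h1
    have hev : ∀ᶠ t in nhdsWithin s S,
        Set.indicator ({1} : Set ℝ) (fun _ => (1 : ℝ)) t = 0 := by
      filter_upwards [mem_nhdsWithin_of_mem_nhds (Metric.ball_mem_nhds s hd)] with t htb
      have ht1 : t ≠ 1 := by
        intro ht; subst ht
        simp [dist_comm] at htb
      simp [Set.indicator, ht1]
    exact (continuousWithinAt_const (b := (0 : ℝ))).congr_of_eventuallyEq hev
      (by simp [Set.indicator, h1])

theorem stmt15 (a r m : H →L[ℂ] H)
    -- `m = |a| = (a* a)^{1/2}`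
    (hm : m.IsPositive) (hm2 : m * m = star a * a)
    -- polar decomposition `a = r |a|` with `r* r |a| = |a|`
    (hr : r * star r * r = r) (ha : a = r * m) (hrr : star r * r * m = m)
    -- `1 ∈ σ(|a|)` is an isolated point of the spectrum
    (h1 : (1 : ℝ) ∈ spectrum ℝ m)
    (hiso : ∃ ε > (0 : ℝ), ∀ s ∈ spectrum ℝ m, |s - 1| < ε → s = 1) :
    -- `v = r χ_{{1}}(|a|)` is a partial isometry with `a v* = v v*`,
    -- hence `a = v + (1 - v v*) a (1 - v* v)`
    ∀ v : H →L[ℂ] H, v = r * cfc (Set.indicator ({1} : Set ℝ) (fun _ => (1 : ℝ))) m →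
      v * star v * v = v ∧ a * star v = v * star v ∧
        a = v + (1 - v * star v) * a * (1 - star v * v) := by
  intro v hv
  subst hv
  set f : ℝ → ℝ := Set.indicator ({1} : Set ℝ) (fun _ => (1 : ℝ)) with hf
  have hsa : IsSelfAdjoint m := hm.isSelfAdjoint
  have hfc : ContinuousOn f (spectrum ℝ m) := stmt15_cont hiso
  set p : H →L[ℂ] H := cfc f m with hp
  have hpsa : IsSelfAdjoint p := cfc_predicate f m
  have hkey : ∀ s : ℝ, s * f s = f s := by
    intro s
    by_cases hs : s = 1 <;> simp [hf, Set.indicator, hs]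
  have hkey2 : ∀ s : ℝ, f s * f s = f s := by
    intro s
    by_cases hs : s = 1 <;> simp [hf, Set.indicator, hs]
  have hmp : m * p = p := by
    conv_lhs => rw [← cfc_id ℝ m, hp]
    rw [← cfc_mul _ _ m continuousOn_id hfc]
    exact cfc_congr fun s _ => hkey s
  have hpp : p * p = p := by
    rw [hp, ← cfc_mul _ _ m hfc hfc]
    exact cfc_congr fun s _ => hkey2 s
  have hpm : p * m = p := by
    have := congrArg star hmp
    rwa [star_mul, hpsa.star_eq, hsa.star_eq] at this
  have hqp : star r * r * p = p := by
    calc star r * r * p = star r * r * (m * p) := by rw [hmp]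
    _ = star r * r * m * p := by noncomm_ring
    _ = m * p := by rw [hrr]
    _ = p := hmp
  have hsv : star (r * p) = p * star r := by rw [star_mul, hpsa.star_eq]
  have e1 : r * p * (p * star r) * (r * p) = r * p := by
    calc r * p * (p * star r) * (r * p)
        = r * (p * p * (star r * r * p)) := by noncomm_ring
    _ = r * (p * (star r * r * p)) := by rw [hpp]
    _ = r * (p * p) := by rw [hqp]
    _ = r * p := by rw [hpp]
  simp only [hsv]
  refine ⟨e1, ?_, ?_⟩
  · calc a * (p * star r) = r * (m * p) * star r := by rw [ha]; noncomm_ring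
    _ = r * p * star r := by rw [hmp]
    _ = r * (p * p) * star r := by rw [hpp]
    _ = r * p * (p * star r) := by noncomm_ring
  · have h2 : a * p = r * p := by rw [ha, mul_assoc, hmp]
    have h3 : r * p * (p * star r) * a = r * p := by
      calc r * p * (p * star r) * a
          = r * (p * p * (star r * r * m)) := by rw [ha]; noncomm_ring
      _ = r * (p * (star r * r * m)) := by rw [hpp]
      _ = r * (p * m) := by rw [hrr]
      _ = r * p := by rw [hpm]
    have h4 : r * p * (p * star r) * (a * p) = r * p := by
      calc r * p * (p * star r) * (a * p)
          = r * p * (p * star r) * a * p := by noncomm_ring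
      _ = r * p * p := by rw [h3]
      _ = r * (p * p) := by noncomm_ring
      _ = r * p := by rw [hpp]
    have expand : r * p + (1 - r * p * (p * star r)) * a * (1 - p * star r * (r * p))
        = r * p + a - a * (p * (star r * r * p)) - r * p * (p * star r) * a
          + r * p * (p * star r) * (a * (p * (star r * r * p))) := by
      noncomm_ring
    rw [expand, hqp, hpp, h2, h3, e1]
    abel
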